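/- Let C_β, σ, C₃ > 0, 0 < b ≤ 1, and e > 0 with 2C_β > 1 + b + e. If (u_t)_{t≥1} is a sequence of nonnegative reals satisfying u_{t+1} ≤ (1 − C_β/t^b)² u_t + (C_β² σ² / C₃) t^{−(2b+e)} for all t ≥ 1, then there exists a constant C > 0 such that u_t ≤ C / t^{b+e} for all t ≥ 1. -/

import Mathlib

private lemma bern_aux (a : ℝ) (ha : 0 ≤ a) (n : ℕ) (han : a ≤ n) (t : ℕ) (ht : 1 ≤ t) :
    (t : ℝ) ^ (-a) * (1 - (n : ℝ) / (t : ℝ)) ≤ ((t : ℝ) + 1) ^ (-a) := by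
  have ht0 : (0 : ℝ) < t := by exact_mod_cast ht
  have ht1 : (0 : ℝ) < (t : ℝ) + 1 := by linarith
  by_cases h : 1 - (n : ℝ) / (t : ℝ) ≤ 0
  · have : (t : ℝ) ^ (-a) * (1 - (n : ℝ) / (t : ℝ)) ≤ 0 :=
      mul_nonpos_of_nonneg_of_nonpos (Real.rpow_nonneg ht0.le _) h
    exact this.trans (Real.rpow_nonneg ht1.le _)
  push_neg at h
  have hfrac0 : (0 : ℝ) < (t : ℝ) / ((t : ℝ) + 1) := by positivity
  have hfrac1 : (t : ℝ) / ((t : ℝ) + 1) ≤ 1 := by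
    rw [div_le_one ht1]; linarith
  -- Bernoulli: 1 - n/(t+1) ≤ (t/(t+1))^n
  have hbern : 1 - (n : ℝ) / ((t : ℝ) + 1) ≤ ((t : ℝ) / ((t : ℝ) + 1)) ^ n := by
    have h2 : (-2 : ℝ) ≤ -(1 / ((t : ℝ) + 1)) := by
      have : 1 / ((t : ℝ) + 1) ≤ 1 := by rw [div_le_one ht1]; linarith
      linarith
    have := one_add_mul_le_pow h2 n
    have heq : (1 : ℝ) + -(1 / ((t : ℝ) + 1)) = (t : ℝ) / ((t : ℝ) + 1) := by
      field_simp
      ring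
    rw [heq] at this
    calc 1 - (n : ℝ) / ((t : ℝ) + 1) = 1 + (n : ℝ) * -(1 / ((t : ℝ) + 1)) := by ring
    _ ≤ _ := this
  have hstep1 : 1 - (n : ℝ) / (t : ℝ) ≤ ((t : ℝ) / ((t : ℝ) + 1)) ^ n := by
    refine le_trans ?_ hbern
    have : (n : ℝ) / ((t : ℝ) + 1) ≤ (n : ℝ) / (t : ℝ) := by
      apply div_le_div_of_nonneg_left (by positivity) ht0; linarith
    linarith
  have hstep2 : ((t : ℝ) / ((t : ℝ) + 1)) ^ n ≤ ((t : ℝ) / ((t : ℝ) + 1)) ^ a := by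
    rw [← Real.rpow_natCast ((t : ℝ) / ((t : ℝ) + 1)) n]
    exact Real.rpow_le_rpow_of_exponent_ge hfrac0 hfrac1 han
  have hkey : (t : ℝ) ^ (-a) * ((t : ℝ) / ((t : ℝ) + 1)) ^ a = ((t : ℝ) + 1) ^ (-a) := by
    rw [Real.div_rpow ht0.le ht1.le, Real.rpow_neg ht0.le, Real.rpow_neg ht1.le]
    field_simp
  calc (t : ℝ) ^ (-a) * (1 - (n : ℝ) / (t : ℝ))
      ≤ (t : ℝ) ^ (-a) * ((t : ℝ) / ((t : ℝ) + 1)) ^ a := by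
        exact mul_le_mul_of_nonneg_left (hstep1.trans hstep2) (Real.rpow_nonneg ht0.le _)
    _ = ((t : ℝ) + 1) ^ (-a) := hkey

set_option maxHeartbeats 2000000 in
/-- Instance of Lemma 3 applied to the second moment of the accumulated sampling
error in Corollary 1: decay of order `t^{−(b+e)}`. -/
theorem stmt_10 (Cβ σ C₃ b e : ℝ) (hCβ : 0 < Cβ) (hσ : 0 < σ) (hC₃ : 0 < C₃)
    (hb0 : 0 < b) (hb1 : b ≤ 1) (he : 0 < e)
    (hCβ' : 1 + b + e < 2 * Cβ)
    (u : ℕ → ℝ) (hu : ∀ t : ℕ, 1 ≤ t → 0 ≤ u t)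
    (hrec : ∀ t : ℕ, 1 ≤ t →
      u (t + 1) ≤ (1 - Cβ / (t : ℝ) ^ b) ^ 2 * u t
        + (Cβ ^ 2 * σ ^ 2 / C₃) * (t : ℝ) ^ (-(2 * b + e))) :
    ∃ C : ℝ, 0 < C ∧ ∀ t : ℕ, 1 ≤ t → u t ≤ C / (t : ℝ) ^ (b + e) := by
  set a : ℝ := b + e with ha_def
  have ha : 0 < a := by positivity
  set K : ℝ := Cβ ^ 2 * σ ^ 2 / C₃ with hK_def
  have hK : 0 < K := by positivity
  set n : ℕ := ⌈a⌉₊ with hn_def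
  have han : a ≤ (n : ℝ) := Nat.le_ceil a
  have hn1 : (n : ℝ) < a + 1 := Nat.ceil_lt_add_one ha.le
  set δ : ℝ := 2 * Cβ - (n : ℝ) with hδ_def
  have hδ : 0 < δ := by simp only [hδ_def]; linarith
  set M : ℝ := 2 * Cβ ^ 2 / δ with hM_def
  have hM : 0 < M := by positivity
  set T : ℕ := max 1 ⌈M ^ b⁻¹⌉₊ with hT_def
  have hT1 : 1 ≤ T := le_max_left _ _
  have hTM : M ≤ (T : ℝ) ^ b := by
    have h1 : M ^ b⁻¹ ≤ (T : ℝ) := by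
      calc M ^ b⁻¹ ≤ (⌈M ^ b⁻¹⌉₊ : ℝ) := Nat.le_ceil _
      _ ≤ (T : ℝ) := by exact_mod_cast Nat.cast_le.mpr (le_max_right _ _)
    calc M = (M ^ b⁻¹) ^ b := (Real.rpow_inv_rpow hM.le hb0.ne').symm
    _ ≤ (T : ℝ) ^ b := Real.rpow_le_rpow (Real.rpow_nonneg hM.le _) h1 hb0.le
  -- the constant
  set C : ℝ := (∑ s ∈ Finset.Icc 1 T, u s * (s : ℝ) ^ a) + 2 * K / δ with hC_def
  have hsum_nonneg : 0 ≤ ∑ s ∈ Finset.Icc 1 T, u s * (s : ℝ) ^ a := by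
    apply Finset.sum_nonneg
    intro s hs
    have hs1 : 1 ≤ s := (Finset.mem_Icc.mp hs).1
    have : (0 : ℝ) < s := by exact_mod_cast hs1
    exact mul_nonneg (hu s hs1) (Real.rpow_nonneg this.le _)
  have hC0 : 0 < C := by
    have : 0 < 2 * K / δ := by positivity
    simp only [hC_def]; linarith
  have hCK : 2 * K / δ ≤ C := by simp only [hC_def]; linarith
  refine ⟨C, hC0, ?_⟩
  -- base : for t in [1, T]
  have hbase : ∀ t : ℕ, 1 ≤ t → t ≤ T → u t ≤ C / (t : ℝ) ^ a := by
    intro t ht htT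
    have ht0 : (0 : ℝ) < t := by exact_mod_cast ht
    have hpow : (0 : ℝ) < (t : ℝ) ^ a := Real.rpow_pos_of_pos ht0 _
    rw [le_div_iff₀ hpow]
    calc u t * (t : ℝ) ^ a
        ≤ ∑ s ∈ Finset.Icc 1 T, u s * (s : ℝ) ^ a := by
          apply Finset.single_le_sum (f := fun s => u s * (s : ℝ) ^ a)
          · intro s hs
            have hs1 : 1 ≤ s := (Finset.mem_Icc.mp hs).1
            have : (0 : ℝ) < s := by exact_mod_cast hs1
            exact mul_nonneg (hu s hs1) (Real.rpow_nonneg this.le _)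
          · exact Finset.mem_Icc.mpr ⟨ht, htT⟩
      _ ≤ C := by
          have h2 : 0 < 2 * K / δ := by positivity
          rw [hC_def]; linarith
  -- inductive step for t ≥ T
  have hstep : ∀ t : ℕ, T ≤ t → u t ≤ C / (t : ℝ) ^ a → u (t + 1) ≤ C / ((t : ℝ) + 1) ^ a := by
    intro t htT hind
    have ht : 1 ≤ t := hT1.trans htT
    have ht0 : (0 : ℝ) < t := by exact_mod_cast ht
    have ht1 : (0 : ℝ) < (t : ℝ) + 1 := by linarith
    set x : ℝ := (t : ℝ) ^ (-b) with hx_def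
    have hx0 : 0 < x := Real.rpow_pos_of_pos ht0 _
    -- x ≤ δ / (2 Cβ²)
    have hxM : Cβ ^ 2 * x ≤ δ / 2 := by
      have hTt : (T : ℝ) ^ b ≤ (t : ℝ) ^ b := by
        apply Real.rpow_le_rpow (Nat.cast_nonneg _) (by exact_mod_cast htT) hb0.le
      have htb : M ≤ (t : ℝ) ^ b := hTM.trans hTt
      have htbpos : (0 : ℝ) < (t : ℝ) ^ b := Real.rpow_pos_of_pos ht0 _
      have hxinv : x = ((t : ℝ) ^ b)⁻¹ := by
        rw [hx_def, Real.rpow_neg ht0.le]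
      have hxle : x ≤ M⁻¹ := by
        rw [hxinv]
        exact inv_anti₀ hM htb
      have : Cβ ^ 2 * x ≤ Cβ ^ 2 * M⁻¹ := by nlinarith
      have hMinv : Cβ ^ 2 * M⁻¹ = δ / 2 := by
        rw [hM_def]; field_simp
      linarith
    -- n/t ≤ n * x
    have hnx : (n : ℝ) / (t : ℝ) ≤ (n : ℝ) * x := by
      have h1 : (t : ℝ)⁻¹ ≤ x := by
        rw [hx_def]
        calc (t : ℝ)⁻¹ = (t : ℝ) ^ (-(1:ℝ)) := by
              rw [Real.rpow_neg_one]
        _ ≤ (t : ℝ) ^ (-b) := by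
              apply Real.rpow_le_rpow_of_exponent_le (by exact_mod_cast ht); linarith
      rw [div_eq_mul_inv]
      exact mul_le_mul_of_nonneg_left h1 (Nat.cast_nonneg _)
    -- rewrite the recurrence
    have hrec' : u (t + 1) ≤ (1 - Cβ * x) ^ 2 * u t + K * (x * (t : ℝ) ^ (-a)) := by
      have h1 := hrec t ht
      have e1 : Cβ / (t : ℝ) ^ b = Cβ * x := by
        rw [hx_def, Real.rpow_neg ht0.le, div_eq_mul_inv]
      have e2 : (t : ℝ) ^ (-(2 * b + e)) = x * (t : ℝ) ^ (-a) := by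
        rw [hx_def, ← Real.rpow_add ht0]
        congr 1
        rw [ha_def]; ring
      rw [e1, e2] at h1
      exact h1
    -- combine
    have hsq : (0 : ℝ) ≤ (1 - Cβ * x) ^ 2 := sq_nonneg _
    have h2 : (1 - Cβ * x) ^ 2 * u t ≤ (1 - Cβ * x) ^ 2 * (C * (t : ℝ) ^ (-a)) := by
      apply mul_le_mul_of_nonneg_left _ hsq
      have : C / (t : ℝ) ^ a = C * (t : ℝ) ^ (-a) := by
        rw [Real.rpow_neg ht0.le, div_eq_mul_inv]
      linarith [hind, this ▸ hind]
    have h4 : (1 - Cβ * x) ^ 2 * C + K * x ≤ C * (1 - (n : ℝ) * x) := by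
      have hbracket : 0 ≤ C * (2 * Cβ - (n : ℝ)) - C * (Cβ ^ 2 * x) - K := by
        have h1 : C * (Cβ ^ 2 * x) ≤ C * (δ / 2) := mul_le_mul_of_nonneg_left hxM hC0.le
        have h2 : 2 * K ≤ C * δ := (div_le_iff₀ hδ).mp hCK
        rw [hδ_def] at h1 h2
        nlinarith [h1, h2]
      nlinarith [mul_nonneg hx0.le hbracket]
    have h5 : u (t + 1) ≤ (C * (1 - (n : ℝ) * x)) * (t : ℝ) ^ (-a) := by
      have hp : (0 : ℝ) ≤ (t : ℝ) ^ (-a) := Real.rpow_nonneg ht0.le _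
      calc u (t + 1) ≤ (1 - Cβ * x) ^ 2 * (C * (t : ℝ) ^ (-a)) + K * (x * (t : ℝ) ^ (-a)) := by
            linarith [hrec', h2]
      _ = ((1 - Cβ * x) ^ 2 * C + K * x) * (t : ℝ) ^ (-a) := by ring
      _ ≤ (C * (1 - (n : ℝ) * x)) * (t : ℝ) ^ (-a) := mul_le_mul_of_nonneg_right h4 hp
    -- Bernoulli comparison
    have h6 : (1 - (n : ℝ) * x) * (t : ℝ) ^ (-a) ≤ ((t : ℝ) + 1) ^ (-a) := by
      have hb := bern_aux a ha.le n han t ht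
      have hmul : (1 - (n : ℝ) * x) * (t : ℝ) ^ (-a)
          ≤ (1 - (n : ℝ) / (t : ℝ)) * (t : ℝ) ^ (-a) := by
        apply mul_le_mul_of_nonneg_right _ (Real.rpow_nonneg ht0.le _)
        linarith
      linarith [hmul, hb, mul_comm ((t : ℝ) ^ (-a)) (1 - (n : ℝ) / (t : ℝ))]
    have h7 : u (t + 1) ≤ C * ((t : ℝ) + 1) ^ (-a) := by
      calc u (t + 1) ≤ (C * (1 - (n : ℝ) * x)) * (t : ℝ) ^ (-a) := h5
      _ = C * ((1 - (n : ℝ) * x) * (t : ℝ) ^ (-a)) := by ring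
      _ ≤ C * ((t : ℝ) + 1) ^ (-a) := mul_le_mul_of_nonneg_left h6 hC0.le
    have : C * ((t : ℝ) + 1) ^ (-a) = C / ((t : ℝ) + 1) ^ a := by
      rw [Real.rpow_neg ht1.le, div_eq_mul_inv]
    rw [← this]
    exact h7
  -- induction ∀ t ≥ T
  have hTind : ∀ t : ℕ, T ≤ t → u t ≤ C / (t : ℝ) ^ a := by
    intro t htT
    induction t, htT using Nat.le_induction with
    | base => exact hbase T hT1 le_rfl
    | succ t htT ih =>
      have := hstep t htT ih
      have hcast : ((t + 1 : ℕ) : ℝ) = (t : ℝ) + 1 := by push_cast; ring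
      rw [hcast]
      exact this
  intro t ht
  rcases le_total t T with h | h
  · exact hbase t ht h
  · exact hTind t h
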